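/- Long-wave expansion of the discrete phase shift: Let c > 0, ℵ > 0, θ ∈ [0,1], ς ∈ ℝ. For ξ ∈ (0, π) set ζ(ξ) = sin²(ξ/2), ħ(ξ) = 1 + (4ς²/3)ζ(ξ), 𝔡(ξ) = 4c²ℵ²ζ(ξ), β(ξ) = cℵ·sin ξ, A(ξ) = 1 − 𝔡(ξ)(1+θ)/(2ħ(ξ)), |ρ(ξ)| = √(A(ξ)² + β(ξ)²/ħ(ξ)), and define the discrete phase shift φ̂(ξ) = arccos(A(ξ)/|ρ(ξ)|). Then, as ξ → 0⁺, φ̂(ξ) − cℵ·ξ − (cℵ/6)·((cℵ)²(3θ + 1) − 1 − ς²)·ξ³ = O(ξ⁴). -/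

import Mathlib

open Filter Asymptotics Topology Real Set

lemma PC_abs_le_of_uIcc {s t : ℝ} (hs : s ∈ Set.uIcc 0 t) : |s| ≤ |t| := by
  rw [Set.uIcc_eq_union] at hs
  rcases hs with hs | hs
  · rcases Set.mem_Icc.1 hs with ⟨h1, h2⟩
    rw [abs_of_nonneg h1]; exact h2.trans (le_abs_self t)
  · rcases Set.mem_Icc.1 hs with ⟨h1, h2⟩
    rw [abs_of_nonpos h2]; exact (neg_le_abs t).trans' (by linarith [neg_le_abs t, neg_abs_le t])

-- arctan is 1-Lipschitz
lemma PC_arctan_lip (p q : ℝ) : |Real.arctan p - Real.arctan q| ≤ |p - q| := by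
  have := convex_univ.norm_image_sub_le_of_norm_hasDerivWithin_le
    (f := Real.arctan) (f' := fun x => 1 / (1 + x ^ 2)) (C := 1)
    (fun x _ => (Real.hasDerivAt_arctan x).hasDerivWithinAt)
    (fun x _ => by
      rw [Real.norm_eq_abs, abs_of_pos (by positivity), div_le_one (by positivity)]
      nlinarith [sq_nonneg x])
    (Set.mem_univ q) (Set.mem_univ p)
  simpa [Real.norm_eq_abs] using this

-- cubic remainder of arctan
lemma PC_arctan_cubic (t : ℝ) (ht : |t| ≤ 1) :
    |Real.arctan t - t + t ^ 3 / 3| ≤ |t| ^ 4 := by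
  have hderiv : ∀ s : ℝ, HasDerivAt (fun s : ℝ => Real.arctan s - s + s ^ 3 / 3)
      (1 / (1 + s ^ 2) - 1 + s ^ 2) s := by
    intro s
    have h1 : HasDerivAt (fun s : ℝ => s ^ 3 / 3) (s ^ 2) s := by
      have := (hasDerivAt_pow 3 s).div_const 3
      refine this.congr_deriv ?_
      push_cast; ring
    exact ((Real.hasDerivAt_arctan s).sub (hasDerivAt_id s)).add h1
  have key := (convex_uIcc (0:ℝ) t).norm_image_sub_le_of_norm_hasDerivWithin_le
    (f := fun s : ℝ => Real.arctan s - s + s ^ 3 / 3)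
    (f' := fun s => 1 / (1 + s ^ 2) - 1 + s ^ 2) (C := |t| ^ 4)
    (fun s _ => (hderiv s).hasDerivWithinAt)
    (fun s hs => by
      have hsle : |s| ≤ |t| := PC_abs_le_of_uIcc hs
      have h2 : 1 / (1 + s ^ 2) - 1 + s ^ 2 = s ^ 4 / (1 + s ^ 2) := by
        field_simp; ring
      simp only [Real.norm_eq_abs]
      rw [h2, abs_of_nonneg (by positivity)]
      have h3 : s ^ 4 / (1 + s ^ 2) ≤ s ^ 4 := by
        rw [div_le_iff₀ (by positivity)]; nlinarith [sq_nonneg s, pow_nonneg (sq_nonneg s) 2]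
      have h4 : s ^ 4 ≤ |t| ^ 4 := by
        calc s ^ 4 = |s| ^ 4 := by rw [← abs_pow, abs_of_nonneg (by positivity)]
        _ ≤ |t| ^ 4 := pow_le_pow_left₀ (abs_nonneg s) hsle 4
      linarith)
    (Set.left_mem_uIcc) (Set.right_mem_uIcc)
  have h0 : Real.arctan 0 - 0 + (0:ℝ) ^ 3 / 3 = 0 := by simp
  rw [Real.norm_eq_abs, Real.norm_eq_abs] at key
  calc |Real.arctan t - t + t ^ 3 / 3|
      = |(Real.arctan t - t + t ^ 3 / 3) - (Real.arctan 0 - 0 + (0:ℝ) ^ 3 / 3)| := by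
        rw [h0, sub_zero]
    _ ≤ |t| ^ 4 * |t - 0| := key
    _ = |t| ^ 4 * |t| := by rw [sub_zero]
    _ ≤ |t| ^ 4 * 1 := by nlinarith [abs_nonneg t, pow_nonneg (abs_nonneg t) 4]
    _ = |t| ^ 4 := mul_one _

-- sqrt expansion
lemma PC_sqrt_quad (w : ℝ) (hw : 0 ≤ w) : |Real.sqrt (1 + w) - (1 + w / 2)| ≤ w ^ 2 := by
  set r := Real.sqrt (1 + w) with hr
  have hr0 : 0 ≤ r := Real.sqrt_nonneg _
  have hr2 : r ^ 2 = 1 + w := Real.sq_sqrt (by linarith)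
  have hup : r ≤ 1 + w / 2 := by nlinarith [sq_nonneg (r - 1 - w / 2)]
  have key : (1 + w / 2 - r) * (1 + w / 2 + r) = w ^ 2 / 4 := by
    linear_combination -hr2
  have hlow : 1 + w / 2 - r ≤ w ^ 2 / 4 := by nlinarith
  rw [abs_le]; constructor <;> nlinarith

-- sin bounds
lemma PC_sin_lin (t : ℝ) (ht : |t| ≤ 1) : |Real.sin t - t| ≤ |t| ^ 3 := by
  have h := Real.sin_bound ht
  have h4 : |t| ^ 4 ≤ |t| ^ 3 := pow_le_pow_of_le_one (abs_nonneg t) ht (by norm_num)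
  have h3 : |t ^ 3 / 6| = |t| ^ 3 / 6 := by rw [abs_div, abs_pow]; norm_num
  calc |Real.sin t - t| = |(Real.sin t - (t - t ^ 3 / 6)) + (- t ^ 3 / 6)| := by ring_nf
    _ ≤ |Real.sin t - (t - t ^ 3 / 6)| + |(- t ^ 3) / 6| := abs_add_le _ _
    _ ≤ |t| ^ 4 * (5 / 96) + |t| ^ 3 / 6 := by
        rw [abs_div, abs_neg, abs_pow]; norm_num; linarith [pow_le_pow_of_le_one (abs_nonneg t) ht (show 4 ≤ 5 by norm_num), pow_nonneg (abs_nonneg t) 4]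
    _ ≤ |t| ^ 3 := by nlinarith [pow_nonneg (abs_nonneg t) 3]

lemma PC_arccos_form (A B H : ℝ) (hA : 0 < A) (hB : 0 < B) (hH : 0 < H) :
    Real.arccos (A / Real.sqrt (A ^ 2 + B ^ 2 / H)) =
      Real.arctan (B / (A * Real.sqrt H)) := by
  have hR2 : 0 < A ^ 2 + B ^ 2 / H := by positivity
  have hR : 0 < Real.sqrt (A ^ 2 + B ^ 2 / H) := Real.sqrt_pos.2 hR2
  have hSH : 0 < Real.sqrt H := Real.sqrt_pos.2 hH
  rw [Real.arccos_eq_arctan (by positivity)]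
  congr 1
  have h1 : 1 - (A / Real.sqrt (A ^ 2 + B ^ 2 / H)) ^ 2
      = (B ^ 2 / H) / (A ^ 2 + B ^ 2 / H) := by
    rw [div_pow, Real.sq_sqrt hR2.le]
    field_simp
    ring
  rw [h1, Real.sqrt_div (by positivity) _]
  rw [Real.sqrt_div (by positivity) H, Real.sqrt_sq hB.le]
  field_simp
open Filter Asymptotics Topology Real Set

theorem discrete_phase_shift_expansion
    (c al θ ς : ℝ) (hc : 0 < c) (hal : 0 < al) (hθ : θ ∈ Set.Icc (0 : ℝ) 1)
    (φd : ℝ → ℝ)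
    (hφd : ∀ ξ ∈ Set.Ioo (0 : ℝ) Real.pi,
      φd ξ =
        Real.arccos ((1 - (4 * c ^ 2 * al ^ 2 * Real.sin (ξ / 2) ^ 2) * (1 + θ)
            / (2 * (1 + 4 * ς ^ 2 / 3 * Real.sin (ξ / 2) ^ 2)))
          / Real.sqrt ((1 - (4 * c ^ 2 * al ^ 2 * Real.sin (ξ / 2) ^ 2) * (1 + θ)
              / (2 * (1 + 4 * ς ^ 2 / 3 * Real.sin (ξ / 2) ^ 2))) ^ 2
            + (c * al * Real.sin ξ) ^ 2
              / (1 + 4 * ς ^ 2 / 3 * Real.sin (ξ / 2) ^ 2)))) :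
    (fun ξ : ℝ =>
        φd ξ - c * al * ξ
          - (c * al / 6) * ((c * al) ^ 2 * (3 * θ + 1) - 1 - ς ^ 2) * ξ ^ 3)
      =O[𝓝[>] (0 : ℝ)] (fun ξ : ℝ => ξ ^ 4) := by
  set l : Filter ℝ := 𝓝[>] (0 : ℝ) with hldef
  -- abbreviations (as plain lambdas)
  set z : ℝ → ℝ := fun x => Real.sin (x / 2) ^ 2 with hzdef
  set hh : ℝ → ℝ := fun x => 1 + 4 * ς ^ 2 / 3 * z x with hhdef
  set A : ℝ → ℝ := fun x => 1 - 4 * c ^ 2 * al ^ 2 * z x * (1 + θ) / (2 * hh x) with hAdef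
  set S : ℝ → ℝ := fun x => Real.sqrt (hh x) with hSdef
  set K : ℝ := c ^ 2 * al ^ 2 * (1 + θ) / 2 - ς ^ 2 / 6 with hKdef
  set F : ℝ → ℝ := fun x => c * al * Real.sin x / (A x * S x) with hFdef
  set y : ℝ → ℝ := fun x => c * al * x + c * al * (K - 1 / 6) * x ^ 3 with hydef
  have hh1 : ∀ x, 1 ≤ hh x := by
    intro x
    have : 0 ≤ 4 * ς ^ 2 / 3 * z x := by
      have : 0 ≤ z x := sq_nonneg _
      positivity
    simp only [hhdef]; linarith
  have hhne : ∀ x, hh x ≠ 0 := fun x => by have := hh1 x; linarith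
  -- basic eventually facts
  have hIoo1 : ∀ᶠ x in l, x ∈ Set.Ioo (0:ℝ) 1 :=
    eventually_of_mem (Ioo_mem_nhdsGT_of_mem ⟨le_refl (0:ℝ), one_pos⟩) (fun x hx => hx)
  -- power comparisons
  have hpow : ∀ m n : ℕ, n ≤ m → (fun x : ℝ => x ^ m) =O[l] (fun x => x ^ n) := by
    intro m n hnm
    apply IsBigO.of_bound 1
    filter_upwards [hIoo1] with x hx
    rw [Real.norm_eq_abs, Real.norm_eq_abs, abs_pow, abs_pow, one_mul]
    exact pow_le_pow_of_le_one (abs_nonneg x) (by rw [abs_of_pos hx.1]; exact hx.2.le) hnm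
  -- tendsto helpers
  have hlle : l ≤ 𝓝 (0:ℝ) := nhdsWithin_le_nhds
  have htz : Tendsto z l (𝓝 0) := by
    have hc : Continuous z := by
      simp only [hzdef]; fun_prop
    have := (hc.tendsto 0).mono_left hlle
    simpa [hzdef] using this
  have hth : Tendsto hh l (𝓝 1) := by
    have := (tendsto_const_nhds (x := (1:ℝ)) (f := l)).add (htz.const_mul (4 * ς ^ 2 / 3))
    simpa [hhdef] using this
  have htA : Tendsto A l (𝓝 1) := by
    have hnum : Tendsto (fun x => 4 * c ^ 2 * al ^ 2 * z x * (1 + θ)) l (𝓝 0) := by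
      have := (htz.const_mul (4 * c ^ 2 * al ^ 2)).mul_const (1 + θ)
      simpa [mul_comm, mul_assoc, mul_left_comm] using this
    have hden : Tendsto (fun x => 2 * hh x) l (𝓝 2) := by
      have := hth.const_mul 2
      simpa using this
    have := (tendsto_const_nhds (x := (1:ℝ)) (f := l)).sub (hnum.div hden two_ne_zero)
    simpa [hAdef] using this
  have htS : Tendsto S l (𝓝 1) := by
    have := (Real.continuous_sqrt.tendsto 1).comp hth
    simpa [hSdef, Function.comp_def] using this
  have htD : Tendsto (fun x => A x * S x) l (𝓝 1) := by
    simpa using htA.mul htS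
  have htinvD : Tendsto (fun x => (A x * S x)⁻¹) l (𝓝 1) := by
    simpa using htD.inv₀ one_ne_zero
  have hO1 : ∀ {f : ℝ → ℝ} {a : ℝ}, Tendsto f l (𝓝 a) → f =O[l] (fun _ => (1:ℝ)) :=
    fun h => h.isBigO_one ℝ
  have hmul1 : ∀ {f g : ℝ → ℝ}, (f =O[l] fun _ => (1:ℝ)) → (g =O[l] fun x => x ^ 4) →
      (fun x => f x * g x) =O[l] (fun x => x ^ 4) := by
    intro f g hf hg; simpa using hf.mul hg
  have hmul22 : ∀ {f g : ℝ → ℝ}, (f =O[l] fun x => x ^ 2) → (g =O[l] fun x => x ^ 2) →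
      (fun x => f x * g x) =O[l] (fun x => x ^ 4) := by
    intro f g hf hg
    have := hf.mul hg
    refine this.trans (IsBigO.of_bound 1 ?_)
    filter_upwards with x
    rw [Real.norm_eq_abs, Real.norm_eq_abs, one_mul]
    have e : x ^ 2 * x ^ 2 = x ^ 4 := by ring
    rw [e]
  -- sin expansion
  have hsin : (fun x => Real.sin x - (x - x ^ 3 / 6)) =O[l] (fun x => x ^ 4) := by
    apply IsBigO.of_bound (5 / 96)
    filter_upwards [hIoo1] with x hx
    have h1 : |x| ≤ 1 := by rw [abs_of_pos hx.1]; exact hx.2.le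
    have := Real.sin_bound h1
    rw [Real.norm_eq_abs, Real.norm_eq_abs, abs_pow, mul_comm]
    linarith [this, pow_le_pow_of_le_one (abs_nonneg x) h1 (show 4 ≤ 5 by norm_num), pow_nonneg (abs_nonneg x) 4]
  -- z expansion
  have hz4 : (fun x => z x - x ^ 2 / 4) =O[l] (fun x => x ^ 4) := by
    apply IsBigO.of_bound (1 / 8)
    filter_upwards [hIoo1] with x hx
    have hx1 : |x / 2| ≤ 1 := by
      rw [abs_of_pos (by linarith [hx.1])]; linarith [hx.2]
    have b1 := PC_sin_lin (x / 2) hx1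
    have b2 : |Real.sin (x / 2) + x / 2| ≤ 2 * |x / 2| := by
      calc |Real.sin (x / 2) + x / 2| ≤ |Real.sin (x / 2)| + |x / 2| := abs_add_le _ _
        _ ≤ |x / 2| + |x / 2| := by linarith [Real.abs_sin_le_abs (x := x / 2)]
        _ = 2 * |x / 2| := by ring
    have e1 : z x - x ^ 2 / 4 = (Real.sin (x / 2) - x / 2) * (Real.sin (x / 2) + x / 2) := by
      simp only [hzdef]; ring
    rw [Real.norm_eq_abs, Real.norm_eq_abs, e1, abs_mul]
    have habs2 : |x / 2| = |x| / 2 := by rw [abs_div]; norm_num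
    have : |Real.sin (x / 2) - x / 2| * |Real.sin (x / 2) + x / 2|
        ≤ |x / 2| ^ 3 * (2 * |x / 2|) := by
      apply mul_le_mul b1 b2 (abs_nonneg _) (by positivity)
    rw [abs_pow]
    calc |Real.sin (x / 2) - x / 2| * |Real.sin (x / 2) + x / 2|
        ≤ |x / 2| ^ 3 * (2 * |x / 2|) := this
      _ = 1 / 8 * |x| ^ 4 := by rw [habs2]; ring
  have hzO2 : z =O[l] (fun x => x ^ 2) := by
    have h2 : (fun x : ℝ => x ^ 2 / 4) =O[l] (fun x => x ^ 2) := by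
      simpa using (isBigO_refl (fun x : ℝ => x ^ 2) l).const_mul_left (1/4) |>.congr_left
        (fun x => by ring)
    have := (hz4.trans (hpow 4 2 (by norm_num))).add h2
    refine this.congr_left fun x => by ring
  -- hh expansion
  have hh4 : (fun x => hh x - (1 + ς ^ 2 / 3 * x ^ 2)) =O[l] (fun x => x ^ 4) := by
    have := hz4.const_mul_left (4 * ς ^ 2 / 3)
    refine this.congr_left fun x => ?_
    simp only [hhdef]; ring
  have hhm1 : (fun x => hh x - 1) =O[l] (fun x => x ^ 2) := by
    have := hzO2.const_mul_left (4 * ς ^ 2 / 3)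
    refine this.congr_left fun x => ?_
    simp only [hhdef]; ring
  -- sqrt expansion
  have hS4 : (fun x => S x - (1 + ς ^ 2 / 6 * x ^ 2)) =O[l] (fun x => x ^ 4) := by
    have hq : (fun x => S x - (1 + (hh x - 1) / 2)) =O[l] (fun x => (hh x - 1) ^ 2) := by
      apply IsBigO.of_bound 1
      filter_upwards with x
      have hw : 0 ≤ hh x - 1 := by linarith [hh1 x]
      have := PC_sqrt_quad (hh x - 1) hw
      have e : 1 + (hh x - 1) = hh x := by ring
      rw [e] at this
      rw [Real.norm_eq_abs, Real.norm_eq_abs, one_mul]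
      exact ((by simpa [hSdef] using this : |S x - (1 + (hh x - 1) / 2)| ≤ (hh x - 1) ^ 2)).trans (le_abs_self _)
    have h1 : (fun x => S x - (1 + (hh x - 1) / 2)) =O[l] (fun x => x ^ 4) :=
      hq.trans (hmul22 hhm1 hhm1 |>.congr_left fun x => by ring)
    have h2 := hh4.const_mul_left (1/2)
    have := h1.add h2
    refine this.congr_left fun x => by ring
  -- A expansion
  have hzh4 : (fun x => z x / hh x - x ^ 2 / 4) =O[l] (fun x => x ^ 4) := by
    have hnum : (fun x => z x - x ^ 2 / 4 - x ^ 2 / 4 * (hh x - 1)) =O[l] (fun x => x ^ 4) := by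
      have h2 : (fun x : ℝ => x ^ 2 / 4) =O[l] (fun x => x ^ 2) :=
        ((isBigO_refl (fun x : ℝ => x ^ 2) l).const_mul_left (1/4)).congr_left
          (fun x => by ring)
      exact (hz4.sub (hmul22 h2 hhm1))
    have hinvh : (fun x => (hh x)⁻¹) =O[l] (fun _ => (1:ℝ)) := by
      apply IsBigO.of_bound 1
      filter_upwards with x
      rw [Real.norm_eq_abs, Real.norm_eq_abs, abs_of_pos (by positivity : (0:ℝ) < (hh x)⁻¹)]
      simp only [abs_one, mul_one]
      rw [inv_le_one_iff₀]; right; exact hh1 x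
    have := hmul1 hinvh hnum
    refine this.congr_left fun x => ?_
    field_simp [hhne x]
    ring
  have hA4 : (fun x => A x - (1 - c ^ 2 * al ^ 2 * (1 + θ) / 2 * x ^ 2)) =O[l]
      (fun x => x ^ 4) := by
    have := hzh4.const_mul_left (-(2 * c ^ 2 * al ^ 2 * (1 + θ)))
    refine this.congr_left fun x => ?_
    simp only [hAdef]
    field_simp
    ring
  -- D expansion
  have hD4 : (fun x => A x * S x - (1 - K * x ^ 2)) =O[l] (fun x => x ^ 4) := by
    have t1 := hmul1 (hO1 htA) hS4
    have ht2 : Tendsto (fun x : ℝ => 1 + ς ^ 2 / 6 * x ^ 2) l (𝓝 1) := by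
      have : Continuous (fun x : ℝ => 1 + ς ^ 2 / 6 * x ^ 2) := by fun_prop
      have := (this.tendsto 0).mono_left hlle
      simpa using this
    have t2 := hmul1 (hO1 ht2) hA4
    have t3 : (fun x : ℝ => -(c ^ 2 * al ^ 2 * (1 + θ) / 2 * (ς ^ 2 / 6)) * x ^ 4) =O[l]
        (fun x => x ^ 4) := (isBigO_refl _ _).const_mul_left _
    have := (t1.add t2).add t3
    refine this.congr_left fun x => ?_
    simp only [hKdef]; ring
  have hDpos : ∀ᶠ x in l, (1:ℝ) / 2 < A x * S x :=
    htD.eventually (eventually_gt_nhds (by norm_num))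
  -- 1/D expansion
  have hinvD4 : (fun x => (A x * S x)⁻¹ - (1 + K * x ^ 2)) =O[l] (fun x => x ^ 4) := by
    have ht1K : Tendsto (fun x : ℝ => 1 + K * x ^ 2) l (𝓝 1) := by
      have : Continuous (fun x : ℝ => 1 + K * x ^ 2) := by fun_prop
      have := (this.tendsto 0).mono_left hlle
      simpa using this
    have hinner : (fun x => 1 - (1 + K * x ^ 2) * (A x * S x)) =O[l] (fun x => x ^ 4) := by
      have t1 := (hmul1 (hO1 ht1K) hD4).neg_left
      have t2 : (fun x : ℝ => K ^ 2 * x ^ 4) =O[l] (fun x => x ^ 4) :=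
        (isBigO_refl _ _).const_mul_left _
      refine (t1.add t2).congr_left fun x => by ring
    have := hmul1 (hO1 htinvD) hinner
    have heq : (fun x => (A x * S x)⁻¹ * (1 - (1 + K * x ^ 2) * (A x * S x))) =ᶠ[l]
        (fun x => (A x * S x)⁻¹ - (1 + K * x ^ 2)) := by
      filter_upwards [hDpos] with x hx
      have hne : A x * S x ≠ 0 := by intro h; rw [h] at hx; norm_num at hx
      field_simp [left_ne_zero_of_mul hne, right_ne_zero_of_mul hne]
    exact (this.congr' heq EventuallyEq.rfl)
  -- F expansion
  have hF4 : (fun x => F x - y x) =O[l] (fun x => x ^ 4) := by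
    have htsin : Tendsto (fun x => c * al * Real.sin x) l (𝓝 0) := by
      have : Continuous (fun x : ℝ => c * al * Real.sin x) := by fun_prop
      have := (this.tendsto 0).mono_left hlle
      simpa using this
    have ht1K : Tendsto (fun x : ℝ => c * al * (1 + K * x ^ 2)) l (𝓝 (c * al)) := by
      have : Continuous (fun x : ℝ => c * al * (1 + K * x ^ 2)) := by fun_prop
      have := (this.tendsto 0).mono_left hlle
      simpa using this
    have t1 := hmul1 (hO1 htsin) hinvD4
    have t2 := hmul1 (hO1 ht1K) hsin
    have t3 : (fun x : ℝ => -(c * al * K / 6) * x ^ 5) =O[l] (fun x => x ^ 4) :=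
      ((hpow 5 4 (by norm_num)).const_mul_left _)
    have := (t1.add t2).add t3
    refine this.congr_left fun x => ?_
    simp only [hFdef, hydef]
    field_simp
    ring
  -- y facts
  have hyO : y =O[l] (fun x => x) := by
    have t1 : (fun x : ℝ => c * al * x) =O[l] (fun x => x) :=
      (isBigO_refl _ _).const_mul_left _
    have t2 : (fun x : ℝ => c * al * (K - 1 / 6) * x ^ 3) =O[l] (fun x => x) :=
      (((hpow 3 1 (by norm_num)).congr_right fun x => pow_one x).const_mul_left _)
    refine (t1.add t2).congr_left fun x => ?_
    simp only [hydef]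
  have hty : Tendsto y l (𝓝 0) := by
    have : Continuous y := by simp only [hydef]; fun_prop
    have := (this.tendsto 0).mono_left hlle
    simpa [hydef] using this
  have hy1 : ∀ᶠ x in l, |y x| ≤ 1 := by
    have hb : ∀ᶠ t in 𝓝 (0:ℝ), |t| ≤ 1 := by
      have := Metric.ball_mem_nhds (0:ℝ) one_pos
      filter_upwards [this] with t ht
      rw [Metric.mem_ball, Real.dist_eq, sub_zero] at ht
      exact ht.le
    exact hty.eventually hb
  -- arctan steps
  have h8 : (fun x => Real.arctan (F x) - Real.arctan (y x)) =O[l] (fun x => x ^ 4) := by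
    refine IsBigO.trans ?_ hF4
    apply IsBigO.of_bound 1
    filter_upwards with x
    rw [Real.norm_eq_abs, Real.norm_eq_abs, one_mul]
    exact PC_arctan_lip (F x) (y x)
  have h9a : (fun x => Real.arctan (y x) - y x + (y x) ^ 3 / 3) =O[l] (fun x => x ^ 4) := by
    refine IsBigO.trans ?_ ((hyO.pow 4))
    apply IsBigO.of_bound 1
    filter_upwards [hy1] with x hx
    rw [Real.norm_eq_abs, Real.norm_eq_abs, one_mul, abs_pow]
    exact PC_arctan_cubic (y x) hx
  have h9b : (fun x => (y x) ^ 3 - (c * al * x) ^ 3) =O[l] (fun x => x ^ 4) := by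
    have hfac : (fun x => (y x) ^ 2 + y x * (c * al * x) + (c * al * x) ^ 2) =O[l]
        (fun x => x ^ 2) := by
      have t1 : (fun x => (y x) ^ 2) =O[l] (fun x => x ^ 2) := by
        have := hyO.pow 2; simpa using this
      have t2 : (fun x => y x * (c * al * x)) =O[l] (fun x => x ^ 2) := by
        have := hyO.mul ((isBigO_refl (fun x : ℝ => x) l).const_mul_left (c * al))
        refine this.trans ?_
        refine (isBigO_refl _ _).congr_left fun x => by ring
      have t3 : (fun x : ℝ => (c * al * x) ^ 2) =O[l] (fun x => x ^ 2) := by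
        have := (isBigO_refl (fun x : ℝ => x ^ 2) l).const_mul_left ((c * al) ^ 2)
        refine this.congr_left fun x => by ring
      exact (t1.add t2).add t3
    have hdiff : (fun x => y x - c * al * x) =O[l] (fun x => x ^ 3) := by
      have := (hpow 3 3 le_rfl).const_mul_left (c * al * (K - 1 / 6))
      refine this.congr_left fun x => ?_
      simp only [hydef]; ring
    have := hdiff.mul hfac
    have h5 : (fun x : ℝ => x ^ 3 * x ^ 2) =O[l] (fun x => x ^ 4) := by
      refine ((hpow 5 4 (by norm_num)).congr_left fun x => by ring)
    refine (this.trans h5).congr_left fun x => by ring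
  have h9 : (fun x => Real.arctan (y x) -
      (c * al * x + (c * al / 6) * ((c * al) ^ 2 * (3 * θ + 1) - 1 - ς ^ 2) * x ^ 3))
      =O[l] (fun x => x ^ 4) := by
    have := h9a.add (h9b.const_mul_left (-(1/3 : ℝ)))
    refine this.congr_left fun x => ?_
    simp only [hydef, hKdef]
    ring
  -- eventual equality with arctan form
  have hApos : ∀ᶠ x in l, 0 < A x := htA.eventually (eventually_gt_nhds (by norm_num))
  have hIpi : ∀ᶠ x in l, x ∈ Set.Ioo (0:ℝ) Real.pi :=
    eventually_of_mem (Ioo_mem_nhdsGT_of_mem ⟨le_refl (0:ℝ), Real.pi_pos⟩) (fun x hx => hx)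
  have heq : (fun x => φd x - c * al * x -
        (c * al / 6) * ((c * al) ^ 2 * (3 * θ + 1) - 1 - ς ^ 2) * x ^ 3) =ᶠ[l]
      (fun x => (Real.arctan (F x) - Real.arctan (y x)) + (Real.arctan (y x) -
        (c * al * x + (c * al / 6) * ((c * al) ^ 2 * (3 * θ + 1) - 1 - ς ^ 2) * x ^ 3))) := by
    filter_upwards [hApos, hIpi] with x hA0 hxpi
    have hsinpos : 0 < Real.sin x := Real.sin_pos_of_pos_of_lt_pi hxpi.1 hxpi.2
    have hBpos : 0 < c * al * Real.sin x := by positivity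
    have hHpos : 0 < hh x := by linarith [hh1 x]
    have harc := PC_arccos_form (A x) (c * al * Real.sin x) (hh x) hA0 hBpos hHpos
    have hφ := hφd x hxpi
    have hform : φd x = Real.arctan (F x) := by
      rw [hφ]
      simp only [hFdef, hSdef, hAdef, hhdef, hzdef] at harc ⊢
      convert harc using 3 <;> ring
    rw [hform]
    ring
  calc (fun x => φd x - c * al * x -
        (c * al / 6) * ((c * al) ^ 2 * (3 * θ + 1) - 1 - ς ^ 2) * x ^ 3)
      =ᶠ[l] _ := heq
    _ =O[l] (fun x => x ^ 4) := h8.add h9
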